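/- Let λ > 0 and η > 0 be real, let L be a natural number, and let a = (a_0,…,a_L) ∈ ℝ^{L+1}. Then ∑_{l=0}^{L} ∑_{h=0}^{∞} (λ^h/h!)·e^{−λ}·((η h)^l/l!)·e^{−η h}·a_l·l! = e^{−λ(1−e^{−η})}·∑_{l=0}^{L} a_l·η^l·T_l(λ·e^{−η}), where all series converge absolutely. (Probabilistically: if N ∼ Poisson(λ) and, conditionally on N = h, N′ ∼ Poisson(η h), then the left side equals 𝔼[g_L(N′) − 1] for the estimator function g_L with g_L(j) = a_j·j! + 1 for j ≤ L and g_L(j) = 1 otherwise.) -/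

import Mathlib

open Real Finset

/-- Stirling numbers of the second kind: the number of partitions of an `n`-element set
into `r` nonempty blocks, via the standard recurrence. -/
def stirling2 : ℕ → ℕ → ℕ
  | 0, 0 => 1
  | 0, _ + 1 => 0
  | _ + 1, 0 => 0
  | n + 1, r + 1 => (r + 1) * stirling2 n (r + 1) + stirling2 n r

/-- The Touchard (Bell) polynomial `T_l(x) = ∑_{r=0}^{l} S(l,r) x^r`. -/
noncomputable def touchard (l : ℕ) (x : ℝ) : ℝ :=
  ∑ r ∈ Finset.range (l + 1), (stirling2 l r : ℝ) * x ^ r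

lemma stirling2_eq_zero : ∀ {n r : ℕ}, n < r → stirling2 n r = 0
  | 0, _ + 1, _ => rfl
  | n + 1, r + 1, h => by
    have h1 : stirling2 n (r + 1) = 0 := stirling2_eq_zero (by omega)
    have h2 : stirling2 n r = 0 := stirling2_eq_zero (by omega)
    simp [stirling2, h1, h2]

/-- `h * (h)_r = (h)_{r+1} + r * (h)_r` in ℕ. -/
lemma mul_descFactorial (h r : ℕ) :
    h * h.descFactorial r = h.descFactorial (r + 1) + r * h.descFactorial r := by
  rcases lt_or_ge h r with hl | hl
  · rw [Nat.descFactorial_eq_zero_iff_lt.mpr hl,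
      Nat.descFactorial_eq_zero_iff_lt.mpr (by omega)]
    simp
  · rw [Nat.descFactorial_succ]
    have : (h - r) * h.descFactorial r + r * h.descFactorial r
        = (h - r + r) * h.descFactorial r := by ring
    rw [this, Nat.sub_add_cancel hl]

/-- `h^l = ∑_{r=0}^{l} S(l,r) (h)_r` in ℕ. -/
lemma pow_eq_sum_stirling2 (h : ℕ) : ∀ l : ℕ,
    h ^ l = ∑ r ∈ Finset.range (l + 1), stirling2 l r * h.descFactorial r
  | 0 => by simp [stirling2]
  | l + 1 => by
    have IH := pow_eq_sum_stirling2 h l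
    have key : ∑ r ∈ Finset.range (l + 1), stirling2 l r * r * h.descFactorial r
        = ∑ r ∈ Finset.range (l + 1), (r + 1) * stirling2 l (r + 1) * h.descFactorial (r + 1) := by
      rw [Finset.sum_range_succ' (fun r => stirling2 l r * r * h.descFactorial r) l,
        Finset.sum_range_succ (fun r => (r + 1) * stirling2 l (r + 1) * h.descFactorial (r + 1)),
        stirling2_eq_zero (Nat.lt_succ_self l)]
      simp only [Nat.mul_zero, Nat.zero_mul, Nat.add_zero]
      apply Finset.sum_congr rfl
      intro r _
      ring
    calc h ^ (l + 1) = ∑ r ∈ Finset.range (l + 1), stirling2 l r * (h * h.descFactorial r) := by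
          rw [pow_succ, IH, Finset.sum_mul]
          apply Finset.sum_congr rfl; intro r _; ring
      _ = ∑ r ∈ Finset.range (l + 1),
            (stirling2 l r * h.descFactorial (r + 1) + stirling2 l r * r * h.descFactorial r) := by
          apply Finset.sum_congr rfl; intro r _; rw [mul_descFactorial]; ring
      _ = ∑ r ∈ Finset.range (l + 1), stirling2 l r * h.descFactorial (r + 1)
            + ∑ r ∈ Finset.range (l + 1), stirling2 l r * r * h.descFactorial r := by
          rw [Finset.sum_add_distrib]
      _ = ∑ r ∈ Finset.range (l + 1),
            ((r + 1) * stirling2 l (r + 1) + stirling2 l r) * h.descFactorial (r + 1) := by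
          rw [key, ← Finset.sum_add_distrib]
          apply Finset.sum_congr rfl; intro r _; ring
      _ = ∑ r ∈ Finset.range (l + 2), stirling2 (l + 1) r * h.descFactorial r := by
          rw [Finset.sum_range_succ' (fun r => stirling2 (l + 1) r * h.descFactorial r) (l + 1)]
          simp [stirling2]

lemma descFactorial_shift (x : ℝ) (r k : ℕ) :
    x ^ (k + r) * ((k + r).descFactorial r : ℝ) / ((k + r).factorial : ℝ)
      = x ^ r * (x ^ k / (k.factorial : ℝ)) := by
  have hd : (k.factorial : ℝ) * ((k + r).descFactorial r : ℝ) = ((k + r).factorial : ℝ) := by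
    rw [← Nat.cast_mul]
    norm_cast
    have := Nat.factorial_mul_descFactorial (show r ≤ k + r by omega)
    simpa using this
  have hk : (k.factorial : ℝ) ≠ 0 := Nat.cast_ne_zero.mpr k.factorial_ne_zero
  have hkr : ((k + r).factorial : ℝ) ≠ 0 := Nat.cast_ne_zero.mpr (k + r).factorial_ne_zero
  field_simp
  rw [pow_add]
  linear_combination (x ^ k * x ^ r) * hd

lemma support_subset (x : ℝ) (r : ℕ) :
    Function.support (fun h : ℕ => x ^ h * (h.descFactorial r : ℝ) / (h.factorial : ℝ))
      ⊆ Set.range (fun k : ℕ => k + r) := by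
  intro h hh
  rcases le_or_gt r h with hc | hc
  · exact ⟨h - r, by simp; omega⟩
  · exfalso
    apply hh
    simp only
    rw [Nat.descFactorial_eq_zero_iff_lt.mpr hc]
    simp

lemma zero_outside (x : ℝ) (r : ℕ) : ∀ h ∉ Set.range (fun k : ℕ => k + r),
    x ^ h * (h.descFactorial r : ℝ) / (h.factorial : ℝ) = 0 := by
  intro h hh
  by_contra hc
  exact hh (support_subset x r hc)

lemma summable_descFactorial (x : ℝ) (r : ℕ) :
    Summable (fun h : ℕ => x ^ h * (h.descFactorial r : ℝ) / (h.factorial : ℝ)) := by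
  rw [← Function.Injective.summable_iff (add_left_injective r) (zero_outside x r)]
  have : ((fun h : ℕ => x ^ h * (h.descFactorial r : ℝ) / (h.factorial : ℝ))
      ∘ (fun k : ℕ => k + r))
      = fun k : ℕ => x ^ r * (x ^ k / (k.factorial : ℝ)) := by
    funext k; exact descFactorial_shift x r k
  rw [this]
  exact (Real.summable_pow_div_factorial x).mul_left _

lemma tsum_descFactorial (x : ℝ) (r : ℕ) :
    ∑' h : ℕ, x ^ h * (h.descFactorial r : ℝ) / (h.factorial : ℝ) = x ^ r * Real.exp x := by
  rw [← Function.Injective.tsum_eq (add_left_injective r) (support_subset x r)]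
  calc ∑' k : ℕ, x ^ (k + r) * ((k + r).descFactorial r : ℝ) / ((k + r).factorial : ℝ)
      = ∑' k : ℕ, x ^ r * (x ^ k / (k.factorial : ℝ)) :=
        tsum_congr fun k => descFactorial_shift x r k
    _ = x ^ r * ∑' k : ℕ, x ^ k / (k.factorial : ℝ) := tsum_mul_left
    _ = x ^ r * Real.exp x := by
        rw [Real.exp_eq_exp_ℝ, NormedSpace.exp_eq_tsum_div]

lemma pow_decomp (x : ℝ) (l : ℕ) : (fun h : ℕ => x ^ h * (h : ℝ) ^ l / (h.factorial : ℝ))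
    = fun h : ℕ => ∑ r ∈ Finset.range (l + 1),
        (stirling2 l r : ℝ) * (x ^ h * (h.descFactorial r : ℝ) / (h.factorial : ℝ)) := by
  funext h
  have := pow_eq_sum_stirling2 h l
  have hcast : ((h : ℝ)) ^ l = ∑ r ∈ Finset.range (l + 1),
      (stirling2 l r : ℝ) * (h.descFactorial r : ℝ) := by
    rw [← Nat.cast_pow, this]
    push_cast
    rfl
  rw [hcast, Finset.mul_sum, Finset.sum_div]
  apply Finset.sum_congr rfl
  intro r _
  ring

lemma summable_pow_mul (x : ℝ) (l : ℕ) :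
    Summable (fun h : ℕ => x ^ h * (h : ℝ) ^ l / (h.factorial : ℝ)) := by
  rw [pow_decomp]
  exact summable_sum fun r _ => (summable_descFactorial x r).mul_left _

lemma dobinski (x : ℝ) (l : ℕ) :
    ∑' h : ℕ, x ^ h * (h : ℝ) ^ l / (h.factorial : ℝ) = Real.exp x * touchard l x := by
  rw [pow_decomp]
  rw [Summable.tsum_finsetSum (fun r _ => (summable_descFactorial x r).mul_left _)]
  unfold touchard
  rw [Finset.mul_sum]
  apply Finset.sum_congr rfl
  intro r _
  rw [tsum_mul_left, tsum_descFactorial]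
  ring

lemma term_eq (lam eta : ℝ) (l : ℕ) (c : ℝ) (h : ℕ) :
    lam ^ h / (Nat.factorial h : ℝ) * Real.exp (-lam) *
        ((eta * h) ^ l / (Nat.factorial l : ℝ)) * Real.exp (-(eta * h)) *
        (c * (Nat.factorial l : ℝ))
      = (Real.exp (-lam) * c * eta ^ l) *
        ((lam * Real.exp (-eta)) ^ h * (h : ℝ) ^ l / (h.factorial : ℝ)) := by
  have he : Real.exp (-(eta * h)) = (Real.exp (-eta)) ^ h := by
    rw [← Real.exp_nat_mul]
    ring_nf
  have hl : (Nat.factorial l : ℝ) ≠ 0 := Nat.cast_ne_zero.mpr l.factorial_ne_zero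
  rw [he, mul_pow, mul_pow]
  field_simp

theorem stmt_10 (lam eta : ℝ) (hlam : 0 < lam) (heta : 0 < eta)
    (L : ℕ) (a : Fin (L + 1) → ℝ) :
    (∀ l : Fin (L + 1), Summable (fun h : ℕ =>
      |lam ^ h / (Nat.factorial h : ℝ) * Real.exp (-lam) *
        ((eta * h) ^ (l : ℕ) / (Nat.factorial (l : ℕ) : ℝ)) * Real.exp (-(eta * h)) *
        (a l * (Nat.factorial (l : ℕ) : ℝ))|)) ∧
    ∑ l : Fin (L + 1), ∑' h : ℕ,
        lam ^ h / (Nat.factorial h : ℝ) * Real.exp (-lam) *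
          ((eta * h) ^ (l : ℕ) / (Nat.factorial (l : ℕ) : ℝ)) * Real.exp (-(eta * h)) *
          (a l * (Nat.factorial (l : ℕ) : ℝ)) =
      Real.exp (-lam * (1 - Real.exp (-eta))) *
        ∑ l : Fin (L + 1), a l * eta ^ (l : ℕ) * touchard (l : ℕ) (lam * Real.exp (-eta)) := by
  set x := lam * Real.exp (-eta) with hx
  constructor
  · intro l
    apply Summable.abs
    have : (fun h : ℕ =>
        lam ^ h / (Nat.factorial h : ℝ) * Real.exp (-lam) *
          ((eta * h) ^ (l : ℕ) / (Nat.factorial (l : ℕ) : ℝ)) * Real.exp (-(eta * h)) *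
          (a l * (Nat.factorial (l : ℕ) : ℝ)))
        = fun h : ℕ => (Real.exp (-lam) * a l * eta ^ (l : ℕ)) *
            (x ^ h * (h : ℝ) ^ (l : ℕ) / (h.factorial : ℝ)) := by
      funext h; exact term_eq lam eta (l : ℕ) (a l) h
    rw [this]
    exact (summable_pow_mul x (l : ℕ)).mul_left _
  · have key : ∀ l : Fin (L + 1), (∑' h : ℕ,
        lam ^ h / (Nat.factorial h : ℝ) * Real.exp (-lam) *
          ((eta * h) ^ (l : ℕ) / (Nat.factorial (l : ℕ) : ℝ)) * Real.exp (-(eta * h)) *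
          (a l * (Nat.factorial (l : ℕ) : ℝ)))
        = Real.exp (-lam) * Real.exp x * (a l * eta ^ (l : ℕ) * touchard (l : ℕ) x) := by
      intro l
      calc (∑' h : ℕ, lam ^ h / (Nat.factorial h : ℝ) * Real.exp (-lam) *
            ((eta * h) ^ (l : ℕ) / (Nat.factorial (l : ℕ) : ℝ)) * Real.exp (-(eta * h)) *
            (a l * (Nat.factorial (l : ℕ) : ℝ)))
          = ∑' h : ℕ, (Real.exp (-lam) * a l * eta ^ (l : ℕ)) *
              (x ^ h * (h : ℝ) ^ (l : ℕ) / (h.factorial : ℝ)) :=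
            tsum_congr fun h => term_eq lam eta (l : ℕ) (a l) h
        _ = (Real.exp (-lam) * a l * eta ^ (l : ℕ)) *
              ∑' h : ℕ, x ^ h * (h : ℝ) ^ (l : ℕ) / (h.factorial : ℝ) := tsum_mul_left
        _ = (Real.exp (-lam) * a l * eta ^ (l : ℕ)) * (Real.exp x * touchard (l : ℕ) x) := by
              rw [dobinski]
        _ = Real.exp (-lam) * Real.exp x * (a l * eta ^ (l : ℕ) * touchard (l : ℕ) x) := by ring
    rw [Finset.sum_congr rfl (fun l _ => key l), ← Finset.mul_sum]
    congr 1
    rw [← Real.exp_add]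
    congr 1
    ring
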